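/- Let d ≥ 1 and g be integers, and let S be an additive subsemigroup of ℕ × ℤ such that: (i) the subgroup of ℤ × ℤ generated by S is all of ℤ × ℤ; (ii) there is a constant C with |s| ≤ Cn for every (n,s) ∈ S with n ≥ 1; (iii) there is n₀ ≥ 1 such that for every n ≥ n₀ the slice S_n := { s ∈ ℤ : (n,s) ∈ S } is finite of cardinality dn − g + 1. Write s_{n,0} = min S_n and s_{n,r_n} = max S_n, where r_n + 1 = |S_n|. Then lim_{n→∞} [ (s_{n,0} + s_{n,r_n})/(2nd) − (1/(n d (r_n+1))) Σ_{s ∈ S_n} s ] = 0; that is, the average of the normalized slopes in S_n converges to the midpoint of the limiting interval divided by d. -/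

import Mathlib

open Filter

/-- The `n`-th slice of a subset `S ⊆ ℕ × ℤ`. -/
def sgSlice (S : Set (ℕ × ℤ)) (n : ℕ) : Set ℤ := {s : ℤ | (n, s) ∈ S}

/-- The `n`-th slice viewed as a set of real numbers. -/
def sgSliceR (S : Set (ℕ × ℤ)) (n : ℕ) : Set ℝ := (fun s : ℤ => (s : ℝ)) '' sgSlice S n

namespace Statement15Aux

open Pointwise

variable {S : Set (ℕ × ℤ)}

lemma insert_add (hadd : ∀ a ∈ S, ∀ b ∈ S, a + b ∈ S) :
    ∀ a ∈ insert (0 : ℕ × ℤ) S, ∀ b ∈ insert (0 : ℕ × ℤ) S, a + b ∈ insert (0 : ℕ × ℤ) S := by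
  rintro a (rfl | ha) b (rfl | hb)
  · simp
  · simp [hb]
  · simp [ha]
  · exact Set.mem_insert_iff.mpr (Or.inr (hadd _ ha _ hb))

lemma nsmul_insert (hadd : ∀ a ∈ S, ∀ b ∈ S, a + b ∈ S)
    (a : ℕ × ℤ) (ha : a ∈ insert (0 : ℕ × ℤ) S) (k : ℕ) :
    k • a ∈ insert (0 : ℕ × ℤ) S := by
  induction k with
  | zero => simp
  | succ k ih => rw [succ_nsmul]; exact insert_add hadd _ ih _ ha

lemma nsmul_pair (k a : ℕ) (b : ℤ) : k • ((a, b) : ℕ × ℤ) = (k * a, (k : ℤ) * b) := by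
  have hf : (k • ((a, b) : ℕ × ℤ)).1 = k • a := map_nsmul (AddMonoidHom.fst ℕ ℤ) _ _
  have hs : (k • ((a, b) : ℕ × ℤ)).2 = k • b := map_nsmul (AddMonoidHom.snd ℕ ℤ) _ _
  apply Prod.ext
  · rw [hf, smul_eq_mul]
  · rw [hs, nsmul_eq_mul]

lemma sum_Icc_reflect (a b : ℤ) :
    ∑ s ∈ Finset.Icc a b, (2 * s - (a + b)) = 0 := by
  have h : ∑ s ∈ Finset.Icc a b, (2 * s - (a + b))
      = ∑ s ∈ Finset.Icc a b, -(2 * s - (a + b)) := by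
    apply Finset.sum_nbij' (fun s => a + b - s) (fun s => a + b - s) <;>
      (intros; simp_all [Finset.mem_Icc]) <;> omega
  have h2 : ∑ s ∈ Finset.Icc a b, -(2 * s - (a + b))
      = -∑ s ∈ Finset.Icc a b, (2 * s - (a + b)) := Finset.sum_neg_distrib _
  omega

lemma no_vertical (d g : ℤ) (hd : 1 ≤ d)
    (hadd : ∀ a ∈ S, ∀ b ∈ S, a + b ∈ S)
    (n₀ : ℕ) (hn₀ : 1 ≤ n₀)
    (hs : ∀ n : ℕ, n₀ ≤ n → (sgSlice S n).Finite ∧ ((sgSlice S n).ncard : ℤ) = d * n - g + 1)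
    (c : ℤ) (hc : c ≠ 0) (hmem : ((0 : ℕ), c) ∈ S) : False := by
  set n : ℕ := max n₀ g.toNat with hn
  obtain ⟨hfin, hcard⟩ := hs n (le_max_left _ _)
  have hng : (g : ℤ) ≤ (n : ℤ) := le_trans (Int.self_le_toNat g) (by exact_mod_cast le_max_right n₀ g.toNat)
  have hdn : (n : ℤ) ≤ d * n := le_mul_of_one_le_left (by positivity) hd
  have hpos : 0 < (sgSlice S n).ncard := by
    have : (1 : ℤ) ≤ (sgSlice S n).ncard := by omega
    exact_mod_cast lt_of_lt_of_le zero_lt_one this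
  obtain ⟨a, ha⟩ := (Set.ncard_pos hfin).mp hpos
  have hinj : Function.Injective (fun k : ℕ => a + ((k : ℤ) + 1) * c) := by
    intro x y h
    simp only at h
    have : ((x : ℤ) + 1) * c = ((y : ℤ) + 1) * c := by linarith
    have := mul_right_cancel₀ hc this
    exact_mod_cast by linarith [this]
  have hmem' : ∀ k : ℕ, a + ((k : ℤ) + 1) * c ∈ sgSlice S n := by
    intro k
    have h1 : (k + 1) • ((0 : ℕ), c) ∈ insert (0 : ℕ × ℤ) S :=
      nsmul_insert hadd _ (Set.mem_insert_iff.mpr (Or.inr hmem)) (k + 1)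
    have h2 : (k + 1) • ((0 : ℕ), c) = ((0 : ℕ), ((k : ℤ) + 1) * c) := by
      have hf : ((k+1) • ((0:ℕ), c)).1 = (k+1) • (0:ℕ) := map_nsmul (AddMonoidHom.fst ℕ ℤ) _ _
      have hsnd : ((k+1) • ((0:ℕ), c)).2 = (k+1) • c := map_nsmul (AddMonoidHom.snd ℕ ℤ) _ _
      rw [Prod.ext_iff]
      refine ⟨?_, ?_⟩
      · rw [hf]; simp
      · rw [hsnd, nsmul_eq_mul]; push_cast; ring
    rw [h2] at h1
    rcases h1 with h1 | h1
    · exfalso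
      have h3 : ((k : ℤ) + 1) * c = 0 := congrArg Prod.snd h1
      rcases mul_eq_zero.mp h3 with h | h
      · omega
      · exact hc h
    · have := hadd _ ha _ h1
      simpa [sgSlice] using this
  exact (hfin.not_infinite) (Set.infinite_of_injective_forall_mem hinj hmem')

lemma exists_pair
    (hadd : ∀ a ∈ S, ∀ b ∈ S, a + b ∈ S)
    (hgen : AddSubgroup.closure ((fun p : ℕ × ℤ => ((p.1 : ℤ), p.2)) '' S) = ⊤)
    (hvert : ∀ c : ℤ, c ≠ 0 → ((0 : ℕ), c) ∈ S → False) :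
    ∃ m : ℕ, 1 ≤ m ∧ ∃ t : ℤ, (m, t) ∈ S ∧ (m, t + 1) ∈ S := by
  set f : ℕ × ℤ →+ ℤ × ℤ := (Nat.castAddMonoidHom ℤ).prodMap (AddMonoidHom.id ℤ) with hf
  have hfapp : ∀ p : ℕ × ℤ, f p = ((p.1 : ℤ), p.2) := fun p => rfl
  set T : Set (ℤ × ℤ) := (fun p : ℕ × ℤ => ((p.1 : ℤ), p.2)) '' S with hT
  have hTf : T = ⇑f '' S := rfl
  have h1 : ((0, 1) : ℤ × ℤ) ∈ AddSubgroup.closure T := by rw [hgen]; trivial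
  have h2 : ((0, 1) : ℤ × ℤ) ∈ AddSubmonoid.closure (T ∪ -T) := by
    rw [← AddSubgroup.closure_toAddSubmonoid]; exact h1
  rw [AddSubmonoid.closure_union] at h2
  rw [AddSubmonoid.mem_sup] at h2
  obtain ⟨y, hy, z, hz, hyz⟩ := h2
  rw [AddSubmonoid.closure_neg, AddSubmonoid.mem_neg] at hz
  have hmap : AddSubmonoid.closure T = AddSubmonoid.map f (AddSubmonoid.closure S) := by
    rw [hTf, AddMonoidHom.map_mclosure]
  have hins : ∀ w : ℤ × ℤ, w ∈ AddSubmonoid.closure T →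
      ∃ a : ℕ × ℤ, a ∈ insert (0 : ℕ × ℤ) S ∧ f a = w := by
    intro w hw
    rw [hmap] at hw
    obtain ⟨a, ha, hfa⟩ := hw
    refine ⟨a, ?_, hfa⟩
    have : AddSubmonoid.closure S ≤ AddSubmonoid.mk ⟨insert (0 : ℕ × ℤ) S,
        fun {x y} hx hy => insert_add hadd x hx y hy⟩ (Set.mem_insert _ _) :=
      AddSubmonoid.closure_le.mpr (Set.subset_insert _ _)
    exact this ha
  obtain ⟨a, ha, hfa⟩ := hins y hy
  obtain ⟨b, hb, hfb⟩ := hins (-z) hz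
  have hab : f a - f b = ((0 : ℤ), (1 : ℤ)) := by
    rw [hfa, hfb, ← hyz]; ring
  rw [hfapp, hfapp] at hab
  have hab1 : (a.1 : ℤ) = (b.1 : ℤ) := by
    have := congrArg Prod.fst hab; simp at this; omega
  have hab2 : a.2 = b.2 + 1 := by
    have := congrArg Prod.snd hab; simp at this; omega
  have ha1b1 : a.1 = b.1 := by exact_mod_cast hab1
  by_cases hb1 : b.1 = 0
  · exfalso
    -- vertical cases
    rcases hb with rfl | hbS
    · -- b = 0, so a = (0, 1)
      rcases ha with rfl | haS
      · simp at hab2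
      · have : a = ((0 : ℕ), (1 : ℤ)) := by
          apply Prod.ext
          · simpa using ha1b1
          · simpa using hab2
        exact hvert 1 one_ne_zero (this ▸ haS)
    · by_cases hb2 : b.2 = 0
      · rcases ha with rfl | haS
        · simp at hab2; omega
        · have : a = ((0 : ℕ), (1 : ℤ)) := by
            apply Prod.ext
            · simp [ha1b1, hb1]
            · simp [hab2, hb2]
          exact hvert 1 one_ne_zero (this ▸ haS)
      · have : b = ((0 : ℕ), b.2) := by
          apply Prod.ext <;> simp [hb1]
        exact hvert b.2 hb2 (this ▸ hbS)
  · -- b.1 ≥ 1 : both a b nonzero hence in S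
    have haS : a ∈ S := by
      rcases ha with rfl | h
      · exfalso; apply hb1; simpa [ha1b1] using ha1b1.symm
      · exact h
    have hbS : b ∈ S := by
      rcases hb with rfl | h
      · exact absurd rfl hb1
      · exact h
    refine ⟨b.1, Nat.one_le_iff_ne_zero.mpr hb1, b.2, by simpa using hbS, ?_⟩
    have : a = (b.1, b.2 + 1) := Prod.ext ha1b1 hab2
    exact this ▸ haS

lemma diam_le (d g : ℤ) (hd : 1 ≤ d)
    (hadd : ∀ a ∈ S, ∀ b ∈ S, a + b ∈ S)
    (m : ℕ) (t : ℤ) (hm : 1 ≤ m) (hp0 : (m, t) ∈ S) (hp1 : (m, t + 1) ∈ S)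
    (n₀ : ℕ) (hn₀ : 1 ≤ n₀)
    (hs : ∀ n : ℕ, n₀ ≤ n → (sgSlice S n).Finite ∧ ((sgSlice S n).ncard : ℤ) = d * n - g + 1)
    (n : ℕ) (hn : n₀ ≤ n) (a b : ℤ) (ha : a ∈ sgSlice S n) (hb : b ∈ sgSlice S n) :
    b - a ≤ d * n := by
  have hn1 : 1 ≤ n := le_trans hn₀ hn
  rcases le_or_gt (b - a) 0 with h | h
  · have : (0 : ℤ) ≤ d * n := by positivity
    omega
  set D : ℕ := (b - a).toNat with hDdef
  have hDz : (D : ℤ) = b - a := Int.toNat_of_nonneg h.le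
  have hD1 : 1 ≤ D := by omega
  have claim : ∀ k : ℕ, 1 ≤ k →
      ((k * D + D + 1 : ℕ) : ℤ) ≤ d * ((k * n + D * m : ℕ) : ℤ) - g + 1 := by
    intro k hk
    set n' : ℕ := k * n + D * m with hn'def
    have hn'₀ : n₀ ≤ n' := by
      calc n₀ ≤ n := hn
        _ ≤ k * n := Nat.le_mul_of_pos_left n hk
        _ ≤ n' := Nat.le_add_right _ _
    obtain ⟨hfin, hcard⟩ := hs n' hn'₀
    have hsub : ∀ r : ℕ, r < k * D + D + 1 → k * a + (b - a) * t + (r : ℤ) ∈ sgSlice S n' := by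
      intro r hr
      set i : ℕ := min (r / D) k with hidef
      set j : ℕ := r - i * D with hjdef
      have hik : i ≤ k := min_le_right _ _
      have hiDr : i * D ≤ r :=
        le_trans (Nat.mul_le_mul_right D (min_le_left _ _)) (Nat.div_mul_le_self r D)
      have hij : i * D + j = r := Nat.add_sub_cancel' hiDr
      have hjD : j ≤ D := by
        rcases le_or_gt (r / D) k with hc | hc
        · have hi' : i = r / D := min_eq_left hc
          have e : r - r / D * D = r % D :=
            Nat.sub_eq_of_eq_add (Nat.mod_add_div' r D).symm
          rw [hjdef, hi', e]
          exact (Nat.mod_lt r (by omega)).le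
        · have hi' : i = k := min_eq_right hc.le
          rw [hjdef, hi']
          refine Nat.sub_le_iff_le_add.mpr ?_
          rw [add_comm]
          exact Nat.lt_succ_iff.mp hr
      -- the element of S
      have hz : (i • ((n, b) : ℕ × ℤ) + (k - i) • ((n, a) : ℕ × ℤ)
          + j • ((m, t + 1) : ℕ × ℤ) + (D - j) • ((m, t) : ℕ × ℤ)) ∈ insert (0 : ℕ × ℤ) S := by
        refine insert_add hadd _ (insert_add hadd _ (insert_add hadd _ ?_ _ ?_) _ ?_) _ ?_
        · exact nsmul_insert hadd _ (Set.mem_insert_iff.mpr (Or.inr hb)) i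
        · exact nsmul_insert hadd _ (Set.mem_insert_iff.mpr (Or.inr ha)) (k - i)
        · exact nsmul_insert hadd _ (Set.mem_insert_iff.mpr (Or.inr hp1)) j
        · exact nsmul_insert hadd _ (Set.mem_insert_iff.mpr (Or.inr hp0)) (D - j)
      have hzval : (i • ((n, b) : ℕ × ℤ) + (k - i) • ((n, a) : ℕ × ℤ)
          + j • ((m, t + 1) : ℕ × ℤ) + (D - j) • ((m, t) : ℕ × ℤ))
          = ((n' : ℕ), k * a + (b - a) * t + (r : ℤ)) := by
        rw [nsmul_pair, nsmul_pair, nsmul_pair, nsmul_pair]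
        have hijZ : (i : ℤ) * (b - a) + (j : ℤ) = (r : ℤ) := by
          have := congrArg (Nat.cast : ℕ → ℤ) hij
          push_cast at this
          rw [hDz] at this
          linarith
        simp only [Prod.mk_add_mk, Prod.mk.injEq]
        constructor
        · show i * n + (k - i) * n + j * m + (D - j) * m = n'
          have hkk : k = i + (k - i) := (Nat.add_sub_cancel' hik).symm
          have hDD : D = j + (D - j) := (Nat.add_sub_cancel' hjD).symm
          rw [hn'def]
          conv_rhs => rw [hkk, hDD]
          ring
        · show (i : ℤ) * b + ((k - i : ℕ) : ℤ) * a + (j : ℤ) * (t + 1) + ((D - j : ℕ) : ℤ) * t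
            = k * a + (b - a) * t + (r : ℤ)
          rw [Nat.cast_sub hik, Nat.cast_sub hjD, hDz]
          linear_combination hijZ
      rw [hzval] at hz
      have : ((n' : ℕ), k * a + (b - a) * t + (r : ℤ)) ∈ S := by
        rcases hz with h0 | hS
        · exfalso
          have := congrArg Prod.fst h0
          simp only [Prod.fst_zero] at this
          omega
        · exact hS
      exact this
    -- cardinality count
    set F : Finset ℤ := (Finset.range (k * D + D + 1)).image
        (fun r : ℕ => k * a + (b - a) * t + (r : ℤ)) with hFdef
    have hinj : Function.Injective (fun r : ℕ => k * a + (b - a) * t + (r : ℤ)) := by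
      intro x y hxy
      simp only [add_right_inj, Nat.cast_inj] at hxy
      exact hxy
    have hFcard : F.card = k * D + D + 1 := by
      rw [hFdef, Finset.card_image_of_injective _ hinj, Finset.card_range]
    have hFsub : ↑F ⊆ sgSlice S n' := by
      intro x hx
      simp only [hFdef, Finset.coe_image, Finset.coe_range, Set.mem_image, Set.mem_Iio] at hx
      obtain ⟨r, hr, rfl⟩ := hx
      exact hsub r hr
    have hle : k * D + D + 1 ≤ (sgSlice S n').ncard := by
      rw [← hFcard, ← Set.ncard_coe_finset F]
      exact Set.ncard_le_ncard hFsub hfin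
    have : ((k * D + D + 1 : ℕ) : ℤ) ≤ ((sgSlice S n').ncard : ℤ) := by exact_mod_cast hle
    omega
  -- conclude
  by_contra hcon
  push_neg at hcon
  have hba : d * n + 1 ≤ b - a := hcon
  have habs : ∀ k : ℕ, 1 ≤ k →
      (k : ℤ) * (b - a) + (b - a) + 1 ≤ d * ((k : ℤ) * n + (b - a) * m) - g + 1 := by
    intro k hk
    have hcl := claim k hk
    push_cast at hcl
    rw [hDz] at hcl
    linarith
  set K : ℤ := d * (b - a) * m - g - (b - a) with hKdef
  obtain ⟨k, hk1, hkK⟩ : ∃ k : ℕ, 1 ≤ k ∧ K < (k : ℤ) :=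
    ⟨K.toNat + 1, Nat.le_add_left _ _, by push_cast; linarith [Int.self_le_toNat K]⟩
  have h1 := habs k hk1
  have hk0 : (0 : ℤ) ≤ (k : ℤ) := Nat.cast_nonneg k
  nlinarith [h1, hkK, mul_le_mul_of_nonneg_left hba hk0]

theorem est (d g : ℤ) (hd : 1 ≤ d) (S : Set (ℕ × ℤ))
    (hadd : ∀ a ∈ S, ∀ b ∈ S, a + b ∈ S)
    (m : ℕ) (t : ℤ) (hm : 1 ≤ m) (hp0 : (m, t) ∈ S) (hp1 : (m, t + 1) ∈ S)
    (n₀ : ℕ) (hn₀ : 1 ≤ n₀)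
    (hs : ∀ n : ℕ, n₀ ≤ n → (sgSlice S n).Finite ∧ ((sgSlice S n).ncard : ℤ) = d * n - g + 1)
    (n : ℕ) (hn : max (max n₀ g.toNat) (2 * g.toNat) ≤ n)
    (hdiam_le : ∀ a b : ℤ, a ∈ sgSlice S n → b ∈ sgSlice S n → b - a ≤ d * n) :
    ‖(sInf (sgSliceR S n) + sSup (sgSliceR S n)) / (2 * (n : ℝ) * (d : ℝ))
          - (1 / ((n : ℝ) * (d : ℝ) * ((sgSlice S n).ncard : ℝ)))
              * ∑ᶠ s ∈ sgSlice S n, (s : ℝ)‖ ≤ (g : ℝ) / n := by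
  classical
  have hnn₀ : n₀ ≤ n := le_trans (le_trans (le_max_left _ _) (le_max_left _ _)) hn
  have hn1 : 1 ≤ n := le_trans hn₀ hnn₀
  have hgn : (g : ℤ) ≤ (n : ℤ) := by
    have h1 : g.toNat ≤ n := le_trans (le_trans (le_max_right _ _) (le_max_left _ _)) hn
    calc g ≤ (g.toNat : ℤ) := Int.self_le_toNat g
      _ ≤ (n : ℤ) := by exact_mod_cast h1
  have h2gn : 2 * g ≤ (n : ℤ) := by
    have h1 : 2 * g.toNat ≤ n := le_trans (le_max_right _ _) hn
    calc 2 * g ≤ 2 * (g.toNat : ℤ) := by linarith [Int.self_le_toNat g]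
      _ ≤ (n : ℤ) := by exact_mod_cast h1
  obtain ⟨hfin, hcard⟩ := hs n hnn₀
  have hdn : (n : ℤ) ≤ d * n := le_mul_of_one_le_left (by positivity) hd
  set F := hfin.toFinset with hF
  have hFcoe : (↑F : Set ℤ) = sgSlice S n := hfin.coe_toFinset
  have hcardF : (F.card : ℤ) = d * n - g + 1 := by
    rw [← Set.ncard_eq_toFinset_card (sgSlice S n) hfin]
    exact hcard
  have hne : F.Nonempty := by
    rw [← Finset.card_pos]
    have : (1 : ℤ) ≤ (F.card : ℤ) := by omega
    exact_mod_cast this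
  set m' := F.min' hne with hm'
  set M' := F.max' hne with hM'
  have hm'mem : m' ∈ sgSlice S n := by rw [← hFcoe]; exact_mod_cast F.min'_mem hne
  have hM'mem : M' ∈ sgSlice S n := by rw [← hFcoe]; exact_mod_cast F.max'_mem hne
  have hdiam : M' - m' ≤ d * n := hdiam_le m' M' hm'mem hM'mem
  have hm'M' : m' ≤ M' := F.min'_le _ (F.max'_mem hne)
  have hIcc : F ⊆ Finset.Icc m' M' := fun x hx => Finset.mem_Icc.mpr ⟨F.min'_le x hx, F.le_max' x hx⟩
  have hcardIcc : ((Finset.Icc m' M').card : ℤ) = M' - m' + 1 := by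
    rw [Int.card_Icc_of_le _ _ (by omega)]; ring
  set G := Finset.Icc m' M' \ F with hG
  have hcardG : (G.card : ℤ) = (M' - m' + 1) - F.card := by
    rw [hG, Finset.card_sdiff_of_subset hIcc, Nat.cast_sub (Finset.card_le_card hIcc), hcardIcc]
  have hGg : (G.card : ℤ) ≤ g := by omega
  have hG0 : (0 : ℤ) ≤ (G.card : ℤ) := Nat.cast_nonneg _
  have hg0 : (0 : ℤ) ≤ g := le_trans hG0 hGg
  -- sum estimates (integer part)
  have hsum0 : ∑ s ∈ Finset.Icc m' M', (2 * s - (m' + M')) = 0 := sum_Icc_reflect m' M'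
  have hsplit : ∑ s ∈ G, (2 * s - (m' + M')) + ∑ s ∈ F, (2 * s - (m' + M')) = 0 := by
    rw [← hsum0]; exact Finset.sum_sdiff hIcc
  have hbound : |∑ s ∈ G, (2 * s - (m' + M'))| ≤ (G.card : ℤ) * (M' - m') := by
    calc |∑ s ∈ G, (2 * s - (m' + M'))| ≤ ∑ s ∈ G, |2 * s - (m' + M')| :=
          Finset.abs_sum_le_sum_abs _ _
      _ ≤ ∑ _s ∈ G, (M' - m') := by
          refine Finset.sum_le_sum fun s hsG => ?_
          have h1 := Finset.mem_Icc.mp (Finset.mem_sdiff.mp hsG).1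
          rw [abs_le]; omega
      _ = (G.card : ℤ) * (M' - m') := by rw [Finset.sum_const, nsmul_eq_mul]
  have hFsum : ∑ s ∈ F, (2 * s - (m' + M')) = 2 * (∑ s ∈ F, s) - (F.card : ℤ) * (m' + M') := by
    rw [Finset.sum_sub_distrib, Finset.sum_const, nsmul_eq_mul, ← Finset.mul_sum]
  have hnum : |2 * (∑ s ∈ F, s) - (F.card : ℤ) * (m' + M')| ≤ g * (d * n) := by
    rw [← hFsum]
    have heq : ∑ s ∈ F, (2 * s - (m' + M')) = -∑ s ∈ G, (2 * s - (m' + M')) := by linarith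
    rw [heq, abs_neg]
    calc |∑ s ∈ G, (2 * s - (m' + M'))| ≤ (G.card : ℤ) * (M' - m') := hbound
      _ ≤ g * (d * n) := mul_le_mul hGg (by omega) (by omega) hg0
  -- real rewrites
  have hRset : sgSliceR S n = ↑(F.image (fun s : ℤ => (s : ℝ))) := by
    rw [sgSliceR, ← hFcoe, Finset.coe_image]
  have hneI : (F.image (fun s : ℤ => (s : ℝ))).Nonempty := hne.image _
  have hsup : sSup (sgSliceR S n) = (M' : ℝ) := by
    rw [hRset, hneI.csSup_eq_max', Finset.max'_image Int.cast_mono]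
  have hinf : sInf (sgSliceR S n) = (m' : ℝ) := by
    rw [hRset, hneI.csInf_eq_min', Finset.min'_image Int.cast_mono]
  have hfs : ∑ᶠ s ∈ sgSlice S n, (s : ℝ) = ((∑ s ∈ F, s : ℤ) : ℝ) := by
    rw [← hFcoe, finsum_mem_coe_finset]
    push_cast
    rfl
  have hncard : ((sgSlice S n).ncard : ℝ) = (F.card : ℝ) := by
    rw [Set.ncard_eq_toFinset_card (sgSlice S n) hfin]
  rw [hsup, hinf, hfs, hncard]
  -- numeric estimate
  set Sz : ℤ := ∑ s ∈ F, s with hSz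
  have hNR1 : (1 : ℝ) ≤ (F.card : ℝ) := by exact_mod_cast Finset.card_pos.mpr hne
  have hnR1 : (1 : ℝ) ≤ (n : ℝ) := by exact_mod_cast hn1
  have hdR1 : (1 : ℝ) ≤ (d : ℝ) := by exact_mod_cast hd
  have hden : (0 : ℝ) < 2 * (n : ℝ) * (d : ℝ) * (F.card : ℝ) := by positivity
  have hEeq : ((m' : ℝ) + (M' : ℝ)) / (2 * (n : ℝ) * (d : ℝ))
      - 1 / ((n : ℝ) * (d : ℝ) * (F.card : ℝ)) * ((Sz : ℤ) : ℝ)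
      = (((F.card : ℤ) * (m' + M') - 2 * Sz : ℤ) : ℝ) / (2 * (n : ℝ) * (d : ℝ) * (F.card : ℝ)) := by
    push_cast
    field_simp
  rw [Real.norm_eq_abs, hEeq, abs_div, abs_of_pos hden]
  have hnumR : |(((F.card : ℤ) * (m' + M') - 2 * Sz : ℤ) : ℝ)| ≤ ((g * (d * n) : ℤ) : ℝ) := by
    rw [← Int.cast_abs]
    have h1 : |(F.card : ℤ) * (m' + M') - 2 * Sz| ≤ g * (d * n) := by
      rw [abs_sub_comm]; exact hnum
    exact_mod_cast h1
  have h2N : (n : ℝ) ≤ 2 * (F.card : ℝ) := by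
    have : (n : ℤ) ≤ 2 * (F.card : ℤ) := by omega
    exact_mod_cast this
  have hg0R : (0 : ℝ) ≤ (g : ℝ) := by exact_mod_cast hg0
  have hd0R : (0 : ℝ) ≤ (d : ℝ) := le_trans zero_le_one hdR1
  have hn0R : (0 : ℝ) ≤ (n : ℝ) := le_trans zero_le_one hnR1
  calc |(((F.card : ℤ) * (m' + M') - 2 * Sz : ℤ) : ℝ)| / (2 * (n : ℝ) * (d : ℝ) * (F.card : ℝ))
      ≤ ((g * (d * n) : ℤ) : ℝ) / (2 * (n : ℝ) * (d : ℝ) * (F.card : ℝ)) :=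
        (div_le_div_iff_of_pos_right hden).mpr hnumR
    _ ≤ (g : ℝ) / n := by
        rw [div_le_div_iff₀ hden (by positivity)]
        push_cast
        nlinarith [mul_nonneg (mul_nonneg (mul_nonneg hg0R hd0R) hn0R)
          (sub_nonneg.mpr h2N)]


end Statement15Aux

/-- Let `S ⊆ ℕ × ℤ` be an additive subsemigroup which generates
`ℤ × ℤ` as a group, has linearly bounded slices, and whose `n`-th slice has
cardinality `d·n - g + 1 (= r_n + 1)` for all large `n`. Writing
`s_{n,0} = min S_n` and `s_{n,r_n} = max S_n`, we have
`(s_{n,0} + s_{n,r_n})/(2nd) - (1/(n d (r_n+1))) Σ_{s ∈ S_n} s → 0`;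
that is, the average of the normalized slopes in `S_n` converges to the midpoint
of the limiting interval divided by `d`. -/
theorem statement_15 (d g : ℤ) (hd : 1 ≤ d) (S : Set (ℕ × ℤ))
    (hadd : ∀ a ∈ S, ∀ b ∈ S, a + b ∈ S)
    (hgen : AddSubgroup.closure ((fun p : ℕ × ℤ => ((p.1 : ℤ), p.2)) '' S) = ⊤)
    (hbdd : ∃ C : ℝ, ∀ p ∈ S, 1 ≤ p.1 → |(p.2 : ℝ)| ≤ C * p.1)
    (hslice : ∃ n₀ : ℕ, 1 ≤ n₀ ∧ ∀ n : ℕ, n₀ ≤ n →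
      (sgSlice S n).Finite ∧ ((sgSlice S n).ncard : ℤ) = d * n - g + 1) :
    Tendsto (fun n : ℕ =>
        (sInf (sgSliceR S n) + sSup (sgSliceR S n)) / (2 * n * d)
          - (1 / ((n : ℝ) * d * ((sgSlice S n).ncard : ℝ)))
              * ∑ᶠ s ∈ sgSlice S n, (s : ℝ))
      atTop (nhds 0) := by
  obtain ⟨n₀, hn₀, hs⟩ := hslice
  have hvert : ∀ c : ℤ, c ≠ 0 → ((0 : ℕ), c) ∈ S → False :=
    fun c hc h => Statement15Aux.no_vertical d g hd hadd n₀ hn₀ hs c hc h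
  obtain ⟨m, hm1, t, hp0, hp1⟩ := Statement15Aux.exists_pair hadd hgen hvert
  apply squeeze_zero_norm' (a := fun n : ℕ => (g : ℝ) / n)
  · rw [eventually_atTop]
    refine ⟨max (max n₀ g.toNat) (2 * g.toNat), fun n hn => ?_⟩
    have hnn₀ : n₀ ≤ n := le_trans (le_trans (le_max_left _ _) (le_max_left _ _)) hn
    have hdiam_le : ∀ a b : ℤ, a ∈ sgSlice S n → b ∈ sgSlice S n → b - a ≤ d * n :=
      fun a b ha hb =>
        Statement15Aux.diam_le d g hd hadd m t hm1 hp0 hp1 n₀ hn₀ hs n hnn₀ a b ha hb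
    exact Statement15Aux.est d g hd S hadd m t hm1 hp0 hp1 n₀ hn₀ hs n hn hdiam_le
  · exact tendsto_const_div_atTop_nhds_zero_nat (g : ℝ)
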